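/- Fix masses m₁, m₂, m₃ > 0 and m = m₁+m₂+m₃. For (x,y) ∈ ℝ² not equal to any of the binary collision points (1,0), (−1/2, √3/2), (−1/2, −√3/2), define r₁₂² = (x−1)²+y², r₁₃² = (x+1/2)²+(y−√3/2)², r₂₃² = (x+1/2)²+(y+√3/2)², I(x,y) = (m₁m₂r₁₂² + m₁m₃r₁₃² + m₂m₃r₂₃²)/m, and the shape potential V(x,y) = √I(x,y)·(m₁m₂/r₁₂ + m₁m₃/r₁₃ + m₂m₃/r₂₃). Then x·∂V/∂x + y·∂V/∂y = φ(x,y)·(1 − x² − y²), where φ(x,y) = (m₁m₂m₃/(2m·√I(x,y)))·(m₁g₁ + m₂g₂ + m₃g₃) with g₁ = (r₁₃²−r₁₂²)(r₁₂⁻³−r₁₃⁻³), g₂ = (r₂₃²−r₁₂²)(r₁₂⁻³−r₂₃⁻³), g₃ = (r₂₃²−r₁₃²)(r₁₃⁻³−r₂₃⁻³). Moreover φ(x,y) ≥ 0, with φ(x,y) = 0 if and only if (x,y) = (0,0). -/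

import Mathlib

set_option maxHeartbeats 1000000


/- STATEMENT 2: the radial derivative identity x·V_x + y·V_y = φ(x,y)·(1 − x² − y²)
for the shape potential of the planar three-body problem, with φ ≥ 0 and φ = 0 only
at the Lagrange point (0,0). -/

noncomputable section

/-- Squared mutual distance r₁₂² at unit size, in shape-sphere coordinates. -/
def r12sq (x y : ℝ) : ℝ := (x - 1) ^ 2 + y ^ 2

/-- Squared mutual distance r₁₃². -/
def r13sq (x y : ℝ) : ℝ := (x + 1 / 2) ^ 2 + (y - Real.sqrt 3 / 2) ^ 2

/-- Squared mutual distance r₂₃². -/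
def r23sq (x y : ℝ) : ℝ := (x + 1 / 2) ^ 2 + (y + Real.sqrt 3 / 2) ^ 2

/-- The moment of inertia I(x,y) (Lagrange's identity). -/
def Ifun (m₁ m₂ m₃ x y : ℝ) : ℝ :=
  (m₁ * m₂ * r12sq x y + m₁ * m₃ * r13sq x y + m₂ * m₃ * r23sq x y) / (m₁ + m₂ + m₃)

/-- The shape potential V(x,y) = √I · (m₁m₂/r₁₂ + m₁m₃/r₁₃ + m₂m₃/r₂₃). -/
def Vfun (m₁ m₂ m₃ x y : ℝ) : ℝ :=
  Real.sqrt (Ifun m₁ m₂ m₃ x y) *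
    (m₁ * m₂ / Real.sqrt (r12sq x y) + m₁ * m₃ / Real.sqrt (r13sq x y)
      + m₂ * m₃ / Real.sqrt (r23sq x y))

/-- The factor φ(x,y) = (m₁m₂m₃/(2m√I))·(m₁g₁ + m₂g₂ + m₃g₃). -/
def phifun (m₁ m₂ m₃ x y : ℝ) : ℝ :=
  m₁ * m₂ * m₃ / (2 * (m₁ + m₂ + m₃) * Real.sqrt (Ifun m₁ m₂ m₃ x y)) *
    (m₁ * (r13sq x y - r12sq x y) * (1 / Real.sqrt (r12sq x y) ^ 3 - 1 / Real.sqrt (r13sq x y) ^ 3)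
      + m₂ * (r23sq x y - r12sq x y) * (1 / Real.sqrt (r12sq x y) ^ 3 - 1 / Real.sqrt (r23sq x y) ^ 3)
      + m₃ * (r23sq x y - r13sq x y) * (1 / Real.sqrt (r13sq x y) ^ 3 - 1 / Real.sqrt (r23sq x y) ^ 3))

private lemma sumsq_pos {x y a b : ℝ} (h : (x, y) ≠ (a, b)) :
    0 < (x - a) ^ 2 + (y - b) ^ 2 := by
  rcases (by positivity : (0:ℝ) ≤ (x - a) ^ 2 + (y - b) ^ 2).lt_or_eq with h0 | h0
  · exact h0
  · exfalso
    apply h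
    have hx : x = a := by nlinarith [sq_nonneg (x - a), sq_nonneg (y - b)]
    have hy : y = b := by nlinarith [sq_nonneg (x - a), sq_nonneg (y - b)]
    rw [hx, hy]

private lemma aux_g_factor {p q : ℝ} (hp : 0 < p) (hq : 0 < q) :
    (q ^ 2 - p ^ 2) * (1 / p ^ 3 - 1 / q ^ 3)
      = (q - p) ^ 2 * ((q + p) * (q ^ 2 + q * p + p ^ 2)) / (p ^ 3 * q ^ 3) := by
  field_simp
  ring

private lemma aux_g_nonneg {p q : ℝ} (hp : 0 < p) (hq : 0 < q) :
    0 ≤ (q ^ 2 - p ^ 2) * (1 / p ^ 3 - 1 / q ^ 3) := by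
  rw [aux_g_factor hp hq]
  positivity

private lemma aux_g_eq_zero {p q : ℝ} (hp : 0 < p) (hq : 0 < q) :
    (q ^ 2 - p ^ 2) * (1 / p ^ 3 - 1 / q ^ 3) = 0 ↔ p = q := by
  constructor
  · intro h0
    rw [aux_g_factor hp hq] at h0
    have hd : (p ^ 3 * q ^ 3) ≠ 0 := by positivity
    have h1 := (div_eq_zero_iff.mp h0).resolve_right hd
    have h2 : (0:ℝ) < (q + p) * (q ^ 2 + q * p + p ^ 2) := by positivity
    rcases mul_eq_zero.mp h1 with h4 | h4
    · have h5 : q - p = 0 := by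
        have h6 : (q - p) * (q - p) = 0 := by rw [← sq]; exact h4
        rcases mul_eq_zero.mp h6 with h7 | h7 <;> exact h7
      linarith
    · exact absurd h4 h2.ne'
  · intro h0
    rw [h0]
    ring

theorem radial_derivative_of_shape_potential (m₁ m₂ m₃ : ℝ)
    (hm₁ : 0 < m₁) (hm₂ : 0 < m₂) (hm₃ : 0 < m₃) (x y : ℝ)
    (h12 : (x, y) ≠ (1, 0))
    (h13 : (x, y) ≠ (-(1 / 2), Real.sqrt 3 / 2))
    (h23 : (x, y) ≠ (-(1 / 2), -(Real.sqrt 3 / 2))) :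
    ∃ Vx Vy : ℝ,
      HasDerivAt (fun s => Vfun m₁ m₂ m₃ s y) Vx x ∧
      HasDerivAt (fun s => Vfun m₁ m₂ m₃ x s) Vy y ∧
      x * Vx + y * Vy = phifun m₁ m₂ m₃ x y * (1 - x ^ 2 - y ^ 2) ∧
      0 ≤ phifun m₁ m₂ m₃ x y ∧
      (phifun m₁ m₂ m₃ x y = 0 ↔ x = 0 ∧ y = 0) := by
  have hm : (0:ℝ) < m₁ + m₂ + m₃ := by linarith
  have h3 : Real.sqrt 3 ^ 2 = 3 := Real.sq_sqrt (by norm_num)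
  have ha : 0 < r12sq x y := by
    have h := sumsq_pos h12
    have e : r12sq x y = (x - 1) ^ 2 + (y - 0) ^ 2 := by unfold r12sq; ring
    rw [e]; exact h
  have hb : 0 < r13sq x y := by
    have h := sumsq_pos h13
    have e : r13sq x y = (x - (-(1 / 2))) ^ 2 + (y - Real.sqrt 3 / 2) ^ 2 := by
      unfold r13sq; ring
    rw [e]; exact h
  have hc : 0 < r23sq x y := by
    have h := sumsq_pos h23
    have e : r23sq x y = (x - (-(1 / 2))) ^ 2 + (y - (-(Real.sqrt 3 / 2))) ^ 2 := by
      unfold r23sq; ring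
    rw [e]; exact h
  have hIpos : 0 < Ifun m₁ m₂ m₃ x y := by
    have h1 : 0 < m₁ * m₂ * r12sq x y + m₁ * m₃ * r13sq x y + m₂ * m₃ * r23sq x y := by
      positivity
    exact div_pos h1 hm
  set p := Real.sqrt (r12sq x y) with hpd
  set q := Real.sqrt (r13sq x y) with hqd
  set r := Real.sqrt (r23sq x y) with hrd
  set ss := Real.sqrt (Ifun m₁ m₂ m₃ x y) with hssd
  have hp : 0 < p := Real.sqrt_pos.mpr ha
  have hq : 0 < q := Real.sqrt_pos.mpr hb
  have hr : 0 < r := Real.sqrt_pos.mpr hc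
  have hss : 0 < ss := Real.sqrt_pos.mpr hIpos
  have hp2 : p ^ 2 = r12sq x y := Real.sq_sqrt ha.le
  have hq2 : q ^ 2 = r13sq x y := Real.sq_sqrt hb.le
  have hr2 : r ^ 2 = r23sq x y := Real.sq_sqrt hc.le
  have hss2 : ss ^ 2 = Ifun m₁ m₂ m₃ x y := Real.sq_sqrt hIpos.le
  -- x-direction derivatives of the squared distances
  have hax : HasDerivAt (fun s : ℝ => r12sq s y) (2 * (x - 1)) x := by
    have h : HasDerivAt (fun s : ℝ => (s - 1) ^ 2 + y ^ 2) (2 * (x - 1)) x := by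
      simpa using (((hasDerivAt_id x).sub_const 1).pow 2).add_const (y ^ 2)
    exact h
  have hbx : HasDerivAt (fun s : ℝ => r13sq s y) (2 * (x + 1 / 2)) x := by
    have h : HasDerivAt (fun s : ℝ => (s + 1 / 2) ^ 2 + (y - Real.sqrt 3 / 2) ^ 2)
        (2 * (x + 1 / 2)) x := by
      simpa using (((hasDerivAt_id x).add_const (1 / 2 : ℝ)).pow 2).add_const
        ((y - Real.sqrt 3 / 2) ^ 2)
    exact h
  have hcx : HasDerivAt (fun s : ℝ => r23sq s y) (2 * (x + 1 / 2)) x := by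
    have h : HasDerivAt (fun s : ℝ => (s + 1 / 2) ^ 2 + (y + Real.sqrt 3 / 2) ^ 2)
        (2 * (x + 1 / 2)) x := by
      simpa using (((hasDerivAt_id x).add_const (1 / 2 : ℝ)).pow 2).add_const
        ((y + Real.sqrt 3 / 2) ^ 2)
    exact h
  -- y-direction derivatives of the squared distances
  have hay : HasDerivAt (fun s : ℝ => r12sq x s) (2 * y) y := by
    have h : HasDerivAt (fun s : ℝ => (x - 1) ^ 2 + s ^ 2) (2 * y) y := by
      simpa using (hasDerivAt_pow 2 y).const_add ((x - 1) ^ 2)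
    exact h
  have hby : HasDerivAt (fun s : ℝ => r13sq x s) (2 * (y - Real.sqrt 3 / 2)) y := by
    have h : HasDerivAt (fun s : ℝ => (x + 1 / 2) ^ 2 + (s - Real.sqrt 3 / 2) ^ 2)
        (2 * (y - Real.sqrt 3 / 2)) y := by
      simpa using (((hasDerivAt_id y).sub_const (Real.sqrt 3 / 2)).pow 2).const_add
        ((x + 1 / 2) ^ 2)
    exact h
  have hcy : HasDerivAt (fun s : ℝ => r23sq x s) (2 * (y + Real.sqrt 3 / 2)) y := by
    have h : HasDerivAt (fun s : ℝ => (x + 1 / 2) ^ 2 + (s + Real.sqrt 3 / 2) ^ 2)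
        (2 * (y + Real.sqrt 3 / 2)) y := by
      simpa using (((hasDerivAt_id y).add_const (Real.sqrt 3 / 2)).pow 2).const_add
        ((x + 1 / 2) ^ 2)
    exact h
  -- derivative of Ifun
  have hIx : HasDerivAt (fun s : ℝ => Ifun m₁ m₂ m₃ s y)
      ((m₁ * m₂ * (2 * (x - 1)) + m₁ * m₃ * (2 * (x + 1 / 2)) + m₂ * m₃ * (2 * (x + 1 / 2)))
        / (m₁ + m₂ + m₃)) x :=
    (((hax.const_mul (m₁ * m₂)).add (hbx.const_mul (m₁ * m₃))).add
      (hcx.const_mul (m₂ * m₃))).div_const _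
  have hIy : HasDerivAt (fun s : ℝ => Ifun m₁ m₂ m₃ x s)
      ((m₁ * m₂ * (2 * y) + m₁ * m₃ * (2 * (y - Real.sqrt 3 / 2))
          + m₂ * m₃ * (2 * (y + Real.sqrt 3 / 2))) / (m₁ + m₂ + m₃)) y :=
    (((hay.const_mul (m₁ * m₂)).add (hby.const_mul (m₁ * m₃))).add
      (hcy.const_mul (m₂ * m₃))).div_const _
  -- sqrt derivatives
  have hsIx := hIx.sqrt hIpos.ne'
  have hsIy := hIy.sqrt hIpos.ne'
  have hsax := hax.sqrt ha.ne'
  have hsbx := hbx.sqrt hb.ne'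
  have hscx := hcx.sqrt hc.ne'
  have hsay := hay.sqrt ha.ne'
  have hsby := hby.sqrt hb.ne'
  have hscy := hcy.sqrt hc.ne'
  -- derivatives of the reciprocal terms
  have h12x := (hasDerivAt_const x (m₁ * m₂)).div hsax hp.ne'
  have h13x := (hasDerivAt_const x (m₁ * m₃)).div hsbx hq.ne'
  have h23x := (hasDerivAt_const x (m₂ * m₃)).div hscx hr.ne'
  have h12y := (hasDerivAt_const y (m₁ * m₂)).div hsay hp.ne'
  have h13y := (hasDerivAt_const y (m₁ * m₃)).div hsby hq.ne'
  have h23y := (hasDerivAt_const y (m₂ * m₃)).div hscy hr.ne'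
  have hUx := (h12x.add h13x).add h23x
  have hUy := (h12y.add h13y).add h23y
  -- the product rule gives the derivative of V
  have hVX : HasDerivAt (fun s : ℝ => Vfun m₁ m₂ m₃ s y)
      ((m₁ * m₂ * (2 * (x - 1)) + m₁ * m₃ * (2 * (x + 1 / 2)) + m₂ * m₃ * (2 * (x + 1 / 2)))
          / (m₁ + m₂ + m₃) / (2 * ss) * (m₁ * m₂ / p + m₁ * m₃ / q + m₂ * m₃ / r)
        - ss * (m₁ * m₂ * (2 * (x - 1)) / (2 * p ^ 3)
            + m₁ * m₃ * (2 * (x + 1 / 2)) / (2 * q ^ 3)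
            + m₂ * m₃ * (2 * (x + 1 / 2)) / (2 * r ^ 3))) x := by
    have h := hsIx.mul hUx
    refine h.congr_deriv ?_
    simp only [Pi.add_apply, Pi.div_apply]
    rw [hpd, hqd, hrd, hssd]
    ring
  have hVY : HasDerivAt (fun s : ℝ => Vfun m₁ m₂ m₃ x s)
      ((m₁ * m₂ * (2 * y) + m₁ * m₃ * (2 * (y - Real.sqrt 3 / 2))
            + m₂ * m₃ * (2 * (y + Real.sqrt 3 / 2)))
          / (m₁ + m₂ + m₃) / (2 * ss) * (m₁ * m₂ / p + m₁ * m₃ / q + m₂ * m₃ / r)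
        - ss * (m₁ * m₂ * (2 * y) / (2 * p ^ 3)
            + m₁ * m₃ * (2 * (y - Real.sqrt 3 / 2)) / (2 * q ^ 3)
            + m₂ * m₃ * (2 * (y + Real.sqrt 3 / 2)) / (2 * r ^ 3))) y := by
    have h := hsIy.mul hUy
    refine h.congr_deriv ?_
    simp only [Pi.add_apply, Pi.div_apply]
    rw [hpd, hqd, hrd, hssd]
    ring
  -- key algebraic facts
  have hsJ : (m₁ * m₂ * p ^ 2 + m₁ * m₃ * q ^ 2 + m₂ * m₃ * r ^ 2) / ((m₁ + m₂ + m₃) * ss)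
      = ss := by
    rw [div_eq_iff (by positivity), hp2, hq2, hr2]
    have h := hss2
    unfold Ifun at h
    field_simp at h
    linear_combination -h
  have hu : x * (2 * (x - 1)) + y * (2 * y) = p ^ 2 + (x ^ 2 + y ^ 2 - 1) := by
    rw [hp2]; unfold r12sq; ring
  have hv : x * (2 * (x + 1 / 2)) + y * (2 * (y - Real.sqrt 3 / 2))
      = q ^ 2 + (x ^ 2 + y ^ 2 - 1) := by
    rw [hq2]; unfold r13sq; linear_combination (-(1:ℝ)/4) * h3
  have hw : x * (2 * (x + 1 / 2)) + y * (2 * (y + Real.sqrt 3 / 2))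
      = r ^ 2 + (x ^ 2 + y ^ 2 - 1) := by
    rw [hr2]; unfold r23sq; linear_combination (-(1:ℝ)/4) * h3
  have hphi : phifun m₁ m₂ m₃ x y
      = m₁ * m₂ * m₃ / (2 * (m₁ + m₂ + m₃) * ss)
        * (m₁ * (q ^ 2 - p ^ 2) * (1 / p ^ 3 - 1 / q ^ 3)
          + m₂ * (r ^ 2 - p ^ 2) * (1 / p ^ 3 - 1 / r ^ 3)
          + m₃ * (r ^ 2 - q ^ 2) * (1 / q ^ 3 - 1 / r ^ 3)) := by
    unfold phifun
    rw [← hpd, ← hqd, ← hrd, ← hssd, ← hp2, ← hq2, ← hr2]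
  refine ⟨_, _, hVX, hVY, ?_, ?_, ?_⟩
  · -- the radial derivative identity
    have hkey : x * ((m₁ * m₂ * (2 * (x - 1)) + m₁ * m₃ * (2 * (x + 1 / 2))
              + m₂ * m₃ * (2 * (x + 1 / 2)))
            / (m₁ + m₂ + m₃) / (2 * ss) * (m₁ * m₂ / p + m₁ * m₃ / q + m₂ * m₃ / r)
          - ss * (m₁ * m₂ * (2 * (x - 1)) / (2 * p ^ 3)
              + m₁ * m₃ * (2 * (x + 1 / 2)) / (2 * q ^ 3)
              + m₂ * m₃ * (2 * (x + 1 / 2)) / (2 * r ^ 3)))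
        + y * ((m₁ * m₂ * (2 * y) + m₁ * m₃ * (2 * (y - Real.sqrt 3 / 2))
              + m₂ * m₃ * (2 * (y + Real.sqrt 3 / 2)))
            / (m₁ + m₂ + m₃) / (2 * ss) * (m₁ * m₂ / p + m₁ * m₃ / q + m₂ * m₃ / r)
          - ss * (m₁ * m₂ * (2 * y) / (2 * p ^ 3)
              + m₁ * m₃ * (2 * (y - Real.sqrt 3 / 2)) / (2 * q ^ 3)
              + m₂ * m₃ * (2 * (y + Real.sqrt 3 / 2)) / (2 * r ^ 3)))
        = (m₁ * m₂ * (x * (2 * (x - 1)) + y * (2 * y))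
            + m₁ * m₃ * (x * (2 * (x + 1 / 2)) + y * (2 * (y - Real.sqrt 3 / 2)))
            + m₂ * m₃ * (x * (2 * (x + 1 / 2)) + y * (2 * (y + Real.sqrt 3 / 2))))
            / ((m₁ + m₂ + m₃) * (2 * ss)) * (m₁ * m₂ / p + m₁ * m₃ / q + m₂ * m₃ / r)
          - (m₁ * m₂ * p ^ 2 + m₁ * m₃ * q ^ 2 + m₂ * m₃ * r ^ 2) / ((m₁ + m₂ + m₃) * ss)
            * (m₁ * m₂ * (x * (2 * (x - 1)) + y * (2 * y)) / (2 * p ^ 3)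
              + m₁ * m₃ * (x * (2 * (x + 1 / 2)) + y * (2 * (y - Real.sqrt 3 / 2))) / (2 * q ^ 3)
              + m₂ * m₃ * (x * (2 * (x + 1 / 2)) + y * (2 * (y + Real.sqrt 3 / 2)))
                / (2 * r ^ 3)) := by
      rw [hsJ]
      field_simp
      ring
    rw [hu, hv, hw] at hkey
    rw [hkey, hphi]
    field_simp
    ring
  · -- φ ≥ 0
    rw [hphi]
    have hK : 0 ≤ m₁ * m₂ * m₃ / (2 * (m₁ + m₂ + m₃) * ss) := by positivity
    have g1 := aux_g_nonneg hp hq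
    have g2 := aux_g_nonneg hp hr
    have g3 := aux_g_nonneg hq hr
    have t1 := mul_nonneg hm₁.le g1
    have t2 := mul_nonneg hm₂.le g2
    have t3 := mul_nonneg hm₃.le g3
    apply mul_nonneg hK
    linarith [t1, t2, t3]
  · -- φ = 0 ↔ (x,y) = (0,0)
    rw [hphi]
    constructor
    · intro h0
      have hK : 0 < m₁ * m₂ * m₃ / (2 * (m₁ + m₂ + m₃) * ss) := by positivity
      have hS := (mul_eq_zero.mp h0).resolve_left hK.ne'
      have g1 := aux_g_nonneg hp hq
      have g2 := aux_g_nonneg hp hr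
      have g3 := aux_g_nonneg hq hr
      have t1 := mul_nonneg hm₁.le g1
      have t2 := mul_nonneg hm₂.le g2
      have t3 := mul_nonneg hm₃.le g3
      have e1 : (q ^ 2 - p ^ 2) * (1 / p ^ 3 - 1 / q ^ 3) = 0 := by
        have h1 : m₁ * ((q ^ 2 - p ^ 2) * (1 / p ^ 3 - 1 / q ^ 3)) = 0 :=
          le_antisymm (by linarith [hS, t2, t3]) t1
        exact (mul_eq_zero.mp h1).resolve_left hm₁.ne'
      have e3 : (r ^ 2 - q ^ 2) * (1 / q ^ 3 - 1 / r ^ 3) = 0 := by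
        have h1 : m₃ * ((r ^ 2 - q ^ 2) * (1 / q ^ 3 - 1 / r ^ 3)) = 0 :=
          le_antisymm (by linarith [hS, t1, t2]) t3
        exact (mul_eq_zero.mp h1).resolve_left hm₃.ne'
      have hpq : p = q := (aux_g_eq_zero hp hq).mp e1
      have hqr : q = r := (aux_g_eq_zero hq hr).mp e3
      have hab : r12sq x y = r13sq x y := by rw [← hp2, ← hq2, hpq]
      have hbc : r13sq x y = r23sq x y := by rw [← hq2, ← hr2, hqr]
      unfold r12sq r13sq at hab
      unfold r13sq r23sq at hbc
      have hsy : Real.sqrt 3 * y = 0 := by linear_combination (-(1:ℝ)/2) * hbc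
      have hy0 : y = 0 := by
        have hs3 : (0:ℝ) < Real.sqrt 3 := Real.sqrt_pos.mpr (by norm_num)
        rcases mul_eq_zero.mp hsy with h | h
        · exact absurd h hs3.ne'
        · exact h
      have hx0 : x = 0 := by
        linear_combination (-(1:ℝ)/3) * hab + ((1:ℝ)/3) * hsy + (-(1:ℝ)/12) * h3
      exact ⟨hx0, hy0⟩
    · rintro ⟨hx0, hy0⟩
      have hab : r12sq x y = r13sq x y := by
        rw [hx0, hy0]; unfold r12sq r13sq; linear_combination (-(1:ℝ)/4) * h3
      have hbc : r13sq x y = r23sq x y := by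
        rw [hx0, hy0]; unfold r13sq r23sq; ring
      have e1 : q ^ 2 - p ^ 2 = 0 := by rw [hp2, hq2, hab]; ring
      have e2 : r ^ 2 - p ^ 2 = 0 := by rw [hp2, hr2, hab, hbc]; ring
      have e3 : r ^ 2 - q ^ 2 = 0 := by rw [hq2, hr2, hbc]; ring
      rw [e1, e2, e3]
      ring

end
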